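/- Let F be a finite field with q elements, let 3 ≤ s ≤ t < v be integers, and let 𝒫 be a vector space partition of F^v such that every member of 𝒫 has dimension 1 or dimension between s and t. Then the set of 1-dimensional members of 𝒫 is a q^{s−1}-divisible set of points of PG(v−1, q); that is, for every hyperplane H of F^v, the number of 1-dimensional members of 𝒫 contained in H is congruent modulo q^{s−1} to the total number of 1-dimensional members of 𝒫. -/

import Mathlib

open scoped Classical

section PGDefs

variable {F : Type} [Field F] {M : Type} [AddCommGroup M] [Module F M]

/-- The number of points of `C` contained in the subspace `S`, i.e. `|C ∩ S|`. -/
noncomputable def interCard (C : Finset (Submodule F M)) (S : Submodule F M) : ℕ :=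
  (C.filter (fun P => P ≤ S)).card

/-- `H` is a hyperplane, i.e. a subspace of codimension 1. -/
def IsHyperplane (H : Submodule F M) : Prop :=
  Module.finrank F ↥H = Module.finrank F M - 1

/-- Every element of `C` is a point, i.e. a 1-dimensional subspace. -/
def IsPointSet (C : Finset (Submodule F M)) : Prop :=
  ∀ P ∈ C, Module.finrank F ↥P = 1

/-- `C` is `Δ`-divisible: `|C ∩ H| ≡ |C| (mod Δ)` for every hyperplane `H`. -/
def DivisibleSet (Δ : ℕ) (C : Finset (Submodule F M)) : Prop :=
  ∀ H : Submodule F M, IsHyperplane H → interCard C H ≡ C.card [MOD Δ]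

noncomputable instance fintypeSubmodule [Finite M] : Fintype (Submodule F M) :=
  have : Finite (Submodule F M) :=
    Finite.of_injective (fun S => (S : Set M)) SetLike.coe_injective
  Fintype.ofFinite _

end PGDefs

section Aux

variable {F : Type} [Field F] [Fintype F] {v : ℕ}

lemma aux_count (q : ℕ) (hq : Fintype.card F = q)
    (P : Finset (Submodule F (Fin v → F)))
    (hpart : ∀ x : Fin v → F, x ≠ 0 → ∃! W, W ∈ P ∧ x ∈ W)
    (S : Submodule F (Fin v → F)) :
    (q : ℤ) ^ (Module.finrank F ↥S) - 1
      = ∑ W ∈ P, ((q : ℤ) ^ (Module.finrank F ↥(W ⊓ S)) - 1) := by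
  classical
  have hcardU : ∀ U : Submodule F (Fin v → F),
      ((Finset.univ.filter (fun x : Fin v → F => x ∈ U ∧ x ≠ 0)).card : ℤ)
        = (q : ℤ) ^ (Module.finrank F ↥U) - 1 := by
    intro U
    have h0 : (0 : Fin v → F) ∈ Finset.univ.filter (fun x : Fin v → F => x ∈ U) := by
      simp [U.zero_mem]
    have he : (Finset.univ.filter fun x : Fin v → F => x ∈ U ∧ x ≠ 0)
        = (Finset.univ.filter (fun x : Fin v → F => x ∈ U)).erase 0 := by
      ext x; simp [Finset.mem_erase, and_comm]
    have hcard : (Finset.univ.filter (fun x : Fin v → F => x ∈ U)).card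
        = q ^ (Module.finrank F ↥U) := by
      rw [← Fintype.card_subtype, Module.card_eq_pow_finrank (K := F), hq]
    have hpos : 0 < (Finset.univ.filter (fun x : Fin v → F => x ∈ U)).card :=
      Finset.card_pos.mpr ⟨0, h0⟩
    rw [he, Finset.card_erase_of_mem h0]
    rw [hcard] at hpos ⊢
    push_cast [Nat.cast_sub hpos]
    ring
  set f : (Fin v → F) → Submodule F (Fin v → F) :=
    fun x => if h : x ≠ 0 then (hpart x h).choose else ⊥ with hf
  have hfP : ∀ x : Fin v → F, x ≠ 0 → f x ∈ P ∧ x ∈ f x := by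
    intro x h
    simp only [hf, dif_pos h]
    exact (hpart x h).choose_spec.1
  have hfu : ∀ (x : Fin v → F), x ≠ 0 → ∀ W, W ∈ P → x ∈ W → f x = W := by
    intro x h W hW hxW
    simp only [hf, dif_pos h]
    exact ((hpart x h).choose_spec.2 W ⟨hW, hxW⟩).symm
  set T := Finset.univ.filter (fun x : Fin v → F => x ∈ S ∧ x ≠ 0) with hT
  have hTcard : T.card = ∑ W ∈ P, (T.filter (fun x => f x = W)).card := by
    apply Finset.card_eq_sum_card_fiberwise
    intro x hx
    rw [hT, Finset.mem_coe, Finset.mem_filter] at hx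
    exact (hfP x hx.2.2).1
  have hfib : ∀ W ∈ P, T.filter (fun x => f x = W)
      = Finset.univ.filter (fun x : Fin v → F => x ∈ W ⊓ S ∧ x ≠ 0) := by
    intro W hW
    ext x
    simp only [hT, Finset.mem_filter, Finset.mem_univ, true_and, Submodule.mem_inf]
    constructor
    · rintro ⟨⟨hxS, hx0⟩, hfx⟩
      exact ⟨⟨hfx ▸ (hfP x hx0).2, hxS⟩, hx0⟩
    · rintro ⟨⟨hxW, hxS⟩, hx0⟩
      exact ⟨⟨hxS, hx0⟩, hfu x hx0 W hW hxW⟩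
  calc (q : ℤ) ^ (Module.finrank F ↥S) - 1 = (T.card : ℤ) := (hcardU S).symm
    _ = ∑ W ∈ P, ((T.filter (fun x => f x = W)).card : ℤ) := by
        rw [hTcard]; push_cast; rfl
    _ = ∑ W ∈ P, ((q : ℤ) ^ (Module.finrank F ↥(W ⊓ S)) - 1) := by
        refine Finset.sum_congr rfl (fun W hW => ?_)
        rw [hfib W hW, hcardU (W ⊓ S)]

end Aux

/-- Lemma 3.1: in a vector space partition all of whose members have dimension 1 or
dimension between `s` and `t` (with `3 ≤ s ≤ t < v`), the 1-dimensional members form a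
`q^(s-1)`-divisible set of points. -/
theorem vsp_tail_divisible (F : Type) [Field F] [Fintype F] (q v s t : ℕ)
    (hq : Fintype.card F = q) (hs : 3 ≤ s) (hst : s ≤ t) (htv : t < v)
    (P : Finset (Submodule F (Fin v → F)))
    (hnz : ∀ W ∈ P, W ≠ ⊥)
    (hpart : ∀ x : Fin v → F, x ≠ 0 → ∃! W, W ∈ P ∧ x ∈ W)
    (hdim : ∀ W ∈ P, Module.finrank F ↥W = 1 ∨
      (s ≤ Module.finrank F ↥W ∧ Module.finrank F ↥W ≤ t)) :
    DivisibleSet (q ^ (s - 1)) (P.filter (fun W => Module.finrank F ↥W = 1)) := by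
  intro H hH
  classical
  set C := P.filter (fun W : Submodule F (Fin v → F) => Module.finrank F ↥W = 1) with hC
  have hv : Module.finrank F (Fin v → F) = v := Module.finrank_fin_fun (R := F)
  have hH' : Module.finrank F ↥H = v - 1 := by
    rw [IsHyperplane, hv] at hH; exact hH
  have hvpos : 3 ≤ v := by omega
  have hq2 : 2 ≤ q := hq ▸ Fintype.one_lt_card
  -- full-space count
  have h1 : (q : ℤ) ^ v - 1 = ∑ W ∈ P, ((q : ℤ) ^ (Module.finrank F ↥W) - 1) := by
    have := aux_count q hq P hpart ⊤
    rw [finrank_top, hv] at this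
    rw [this]
    exact Finset.sum_congr rfl (fun W _ => by rw [inf_top_eq])
  have h2 : (q : ℤ) ^ (v - 1) - 1
      = ∑ W ∈ P, ((q : ℤ) ^ (Module.finrank F ↥(W ⊓ H)) - 1) := by
    have := aux_count q hq P hpart H
    rwa [hH'] at this
  have hmain : (q : ℤ) ^ v - (q : ℤ) ^ (v - 1)
      = ∑ W ∈ P, ((q : ℤ) ^ (Module.finrank F ↥W) - (q : ℤ) ^ (Module.finrank F ↥(W ⊓ H))) := by
    have hre : ∑ W ∈ P, ((q : ℤ) ^ (Module.finrank F ↥W) - (q : ℤ) ^ (Module.finrank F ↥(W ⊓ H)))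
        = ∑ W ∈ P, (((q : ℤ) ^ (Module.finrank F ↥W) - 1)
            - ((q : ℤ) ^ (Module.finrank F ↥(W ⊓ H)) - 1)) := by
      refine Finset.sum_congr rfl (fun W _ => by ring)
    rw [hre, Finset.sum_sub_distrib, ← h1, ← h2]
    ring
  have hsplit := Finset.sum_filter_add_sum_filter_not P
    (fun W => Module.finrank F ↥W = 1)
    (fun W => (q : ℤ) ^ (Module.finrank F ↥W) - (q : ℤ) ^ (Module.finrank F ↥(W ⊓ H)))
  -- the sum over points
  have hm : interCard C H = (C.filter (fun W => W ≤ H)).card := rfl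
  have hn := Finset.card_filter_add_card_filter_not (s := C) (fun W => W ≤ H)
  have hpts : ∑ W ∈ C, ((q : ℤ) ^ (Module.finrank F ↥W) - (q : ℤ) ^ (Module.finrank F ↥(W ⊓ H)))
      = ((C.card : ℤ) - (interCard C H : ℤ)) * ((q : ℤ) - 1) := by
    rw [← Finset.sum_filter_add_sum_filter_not C (fun W => W ≤ H)]
    have e1 : ∑ W ∈ C.filter (fun W => W ≤ H),
        ((q : ℤ) ^ (Module.finrank F ↥W) - (q : ℤ) ^ (Module.finrank F ↥(W ⊓ H))) = 0 := by
      refine Finset.sum_eq_zero (fun W hW => ?_)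
      rw [Finset.mem_filter] at hW
      rw [inf_eq_left.mpr hW.2]
      ring
    have e2 : ∑ W ∈ C.filter (fun W => ¬ W ≤ H),
        ((q : ℤ) ^ (Module.finrank F ↥W) - (q : ℤ) ^ (Module.finrank F ↥(W ⊓ H)))
        = ((C.filter (fun W => ¬ W ≤ H)).card : ℤ) * ((q : ℤ) - 1) := by
      rw [Finset.sum_congr rfl (fun W hW => ?_), Finset.sum_const, nsmul_eq_mul]
      rw [Finset.mem_filter, hC, Finset.mem_filter] at hW
      obtain ⟨⟨hWP, hW1⟩, hWH⟩ := hW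
      have hle : W ⊓ H ≤ W := inf_le_left
      have hfle : Module.finrank F ↥(W ⊓ H) ≤ 1 := hW1 ▸ Submodule.finrank_mono hle
      have hne : Module.finrank F ↥(W ⊓ H) ≠ 1 := by
        intro h
        exact hWH (le_of_eq_of_le (Submodule.eq_of_le_of_finrank_eq hle (h.trans hW1.symm)).symm
          inf_le_right)
      have h0 : Module.finrank F ↥(W ⊓ H) = 0 := by omega
      rw [hW1, h0]
      ring
    rw [e1, e2, hm]
    have : ((C.filter (fun W => ¬ W ≤ H)).card : ℤ)
        = (C.card : ℤ) - ((C.filter (fun W => W ≤ H)).card : ℤ) := by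
      push_cast [← hn]; ring
    rw [this]
    ring
  -- divisibility of the big-members sum
  have hbig : ((q : ℤ) ^ (s - 1) * ((q : ℤ) - 1)) ∣
      ∑ W ∈ P.filter (fun W : Submodule F (Fin v → F) => ¬ Module.finrank F ↥W = 1),
        ((q : ℤ) ^ (Module.finrank F ↥W) - (q : ℤ) ^ (Module.finrank F ↥(W ⊓ H))) := by
    refine Finset.dvd_sum (fun W hW => ?_)
    rw [Finset.mem_filter] at hW
    obtain ⟨hWP, hW1⟩ := hW
    have hds : s ≤ Module.finrank F ↥W := ((hdim W hWP).resolve_left hW1).1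
    have hle1 : Module.finrank F ↥(W ⊓ H) ≤ Module.finrank F ↥W :=
      Submodule.finrank_mono inf_le_left
    have hsup : Module.finrank F ↥(W ⊔ H) ≤ v := by
      have := Submodule.finrank_le (W ⊔ H); omega
    have heq := Submodule.finrank_sup_add_finrank_inf_eq W H
    rw [hH'] at heq
    have hge : Module.finrank F ↥W ≤ Module.finrank F ↥(W ⊓ H) + 1 := by omega
    rcases Nat.eq_or_lt_of_le hle1 with hcase | hcase
    · rw [hcase]; simp
    · have hd : Module.finrank F ↥W = Module.finrank F ↥(W ⊓ H) + 1 := by omega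
      have hse : s - 1 ≤ Module.finrank F ↥(W ⊓ H) := by omega
      refine ⟨(q : ℤ) ^ (Module.finrank F ↥(W ⊓ H) - (s - 1)), ?_⟩
      have hpow : (q : ℤ) ^ (Module.finrank F ↥(W ⊓ H))
          = (q : ℤ) ^ (s - 1) * (q : ℤ) ^ (Module.finrank F ↥(W ⊓ H) - (s - 1)) := by
        rw [← pow_add]; congr 1; omega
      rw [hd, pow_succ, hpow]
      ring
  have hlhs : ((q : ℤ) ^ (s - 1) * ((q : ℤ) - 1)) ∣ ((q : ℤ) ^ v - (q : ℤ) ^ (v - 1)) := by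
    refine ⟨(q : ℤ) ^ (v - 1 - (s - 1)), ?_⟩
    have hpow : (q : ℤ) ^ (v - 1)
        = (q : ℤ) ^ (s - 1) * (q : ℤ) ^ (v - 1 - (s - 1)) := by
      rw [← pow_add]; congr 1; omega
    have hv1 : (q : ℤ) ^ v = (q : ℤ) ^ (v - 1) * q := by
      rw [← pow_succ]; congr 1; omega
    rw [hv1, hpow]
    ring
  have hdvd : ((q : ℤ) ^ (s - 1) * ((q : ℤ) - 1)) ∣
      ((C.card : ℤ) - (interCard C H : ℤ)) * ((q : ℤ) - 1) := by
    have heq : ((C.card : ℤ) - (interCard C H : ℤ)) * ((q : ℤ) - 1)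
        = ((q : ℤ) ^ v - (q : ℤ) ^ (v - 1))
          - ∑ W ∈ P.filter (fun W : Submodule F (Fin v → F) => ¬ Module.finrank F ↥W = 1),
              ((q : ℤ) ^ (Module.finrank F ↥W) - (q : ℤ) ^ (Module.finrank F ↥(W ⊓ H))) := by
      rw [← hpts]
      have : ∑ W ∈ C, ((q : ℤ) ^ (Module.finrank F ↥W) - (q : ℤ) ^ (Module.finrank F ↥(W ⊓ H)))
          + ∑ W ∈ P.filter (fun W : Submodule F (Fin v → F) => ¬ Module.finrank F ↥W = 1),
              ((q : ℤ) ^ (Module.finrank F ↥W) - (q : ℤ) ^ (Module.finrank F ↥(W ⊓ H)))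
          = (q : ℤ) ^ v - (q : ℤ) ^ (v - 1) := by rw [hmain]; exact hsplit
      linarith
    rw [heq]
    exact dvd_sub hlhs hbig
  obtain ⟨c, hc⟩ := hdvd
  have hq1 : ((q : ℤ) - 1) ≠ 0 := by
    have : (2 : ℤ) ≤ (q : ℤ) := by exact_mod_cast hq2
    intro h; linarith
  have hfin : ((C.card : ℤ) - (interCard C H : ℤ)) = (q : ℤ) ^ (s - 1) * c := by
    apply mul_right_cancel₀ hq1
    rw [hc]; ring
  rw [Nat.modEq_iff_dvd]
  push_cast
  exact ⟨c, hfin⟩
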